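/- arXiv:1411.2252 — 5 statements merged into one kernel-verified Lean document; each statement's English description precedes it below -/
import Mathlib

section
/- Let p/q be a continued-fraction convergent of a real number α (so that |α − p/q| < 1/q² and gcd(p,q)=1). Then for every real θ, |Σ_{i=1}^{q} ({θ + iα} − 1/2)| < 3/2, where {x} denotes the fractional part of x. -/
open Finset

/-- If `q ∣ (i-j)*p` with `gcd p q = 1` and `i j ∈ [1,q]`, then `i = j`. -/
lemma fract_aux_inj (p : ℤ) (q : ℕ) (hq : 0 < q) (hgcd : Int.gcd p q = 1)
    {i j : ℕ} (hi : i ∈ Finset.Icc 1 q) (hj : j ∈ Finset.Icc 1 q)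
    (h : (q : ℤ) ∣ ((i : ℤ) - j) * p) : i = j := by
  simp only [Finset.mem_Icc] at hi hj
  have hcop : IsCoprime ((q : ℤ)) p := by
    rw [Int.isCoprime_iff_gcd_eq_one, Int.gcd_comm]
    exact hgcd
  have hdvd : (q : ℤ) ∣ ((i : ℤ) - j) := hcop.dvd_of_dvd_mul_right h
  have h0 : (i : ℤ) - j = 0 := by
    apply Int.eq_zero_of_dvd_of_natAbs_lt_natAbs hdvd
    simp only [Int.natAbs_natCast]
    omega
  omega

/-- Separation: fractional parts of `θ + i p/q` for distinct `i ∈ [1,q]` differ by at least `1/q`. -/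
lemma fract_sep (p : ℤ) (q : ℕ) (hq : 0 < q) (hgcd : Int.gcd p q = 1) (θ : ℝ)
    {i j : ℕ} (hi : i ∈ Finset.Icc 1 q) (hj : j ∈ Finset.Icc 1 q) (hij : i ≠ j) :
    1 / (q : ℝ) ≤ |Int.fract (θ + i * ((p : ℝ) / q)) - Int.fract (θ + j * ((p : ℝ) / q))| := by
  have hq0 : (0 : ℝ) < q := by exact_mod_cast hq
  set a := θ + (i : ℝ) * ((p : ℝ) / q) with ha
  set b := θ + (j : ℝ) * ((p : ℝ) / q) with hb
  set k : ℤ := ⌊a⌋ - ⌊b⌋ with hk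
  set N : ℤ := ((i : ℤ) - j) * p - k * q with hN
  have hNne : N ≠ 0 := by
    intro h0
    have hdvd : (q : ℤ) ∣ ((i : ℤ) - j) * p := ⟨k, by linear_combination h0⟩
    exact hij (fract_aux_inj p q hq hgcd hi hj hdvd)
  have heq : Int.fract a - Int.fract b = (N : ℝ) / q := by
    rw [Int.fract, Int.fract, hN, hk, ha, hb]
    push_cast
    field_simp
    ring
  rw [heq, abs_div, abs_of_pos hq0]
  have h1 : (1 : ℝ) ≤ |(N : ℝ)| := by
    have := Int.one_le_abs hNne
    calc (1 : ℝ) ≤ ((|N| : ℤ) : ℝ) := by exact_mod_cast this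
    _ = |(N : ℝ)| := by push_cast; ring
  gcongr

/-- Key summation identity: `∑_{i=1}^q {θ + i p/q} = {qθ} + (q-1)/2`. -/
lemma fract_sum_eq (p : ℤ) (q : ℕ) (hq : 0 < q) (hgcd : Int.gcd p q = 1) (θ : ℝ) :
    ∑ i ∈ Finset.Icc 1 q, Int.fract (θ + i * ((p : ℝ) / q))
      = Int.fract ((q : ℝ) * θ) + ((q : ℝ) - 1) / 2 := by
  have hq0 : (0 : ℝ) < q := by exact_mod_cast hq
  obtain ⟨m, hm⟩ : ∃ m : ℤ, m = ⌊(q : ℝ) * θ⌋ := ⟨_, rfl⟩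
  obtain ⟨u, hu⟩ : ∃ u : ℝ, u = Int.fract ((q : ℝ) * θ) := ⟨_, rfl⟩
  have hu0 : 0 ≤ u := hu ▸ Int.fract_nonneg _
  have hu1 : u < 1 := hu ▸ Int.fract_lt_one _
  have hθ : θ = ((m : ℝ) + u) / q := by
    rw [hu, Int.fract, hm]
    field_simp
    ring
  -- the bijection i ↦ (m + i*p) % q
  obtain ⟨F, hF⟩ : ∃ F : ℕ → ℕ, F = fun i : ℕ => ((m + (i : ℤ) * p) % (q : ℤ)).toNat := ⟨_, rfl⟩
  have hFlt : ∀ i, F i < q := by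
    intro i
    have h1 : (m + (i : ℤ) * p) % (q : ℤ) < q :=
      Int.emod_lt_of_pos _ (by exact_mod_cast hq)
    have h2 : 0 ≤ (m + (i : ℤ) * p) % (q : ℤ) :=
      Int.emod_nonneg _ (by exact_mod_cast hq.ne')
    simp only [hF]
    omega
  have hval : ∀ i ∈ Finset.Icc 1 q,
      Int.fract (θ + i * ((p : ℝ) / q)) = ((F i : ℝ) + u) / q := by
    intro i _
    obtain ⟨s, hs⟩ : ∃ s : ℤ, s = (m + (i : ℤ) * p) % (q : ℤ) := ⟨_, rfl⟩
    obtain ⟨k, hk⟩ : ∃ k : ℤ, k = (m + (i : ℤ) * p) / (q : ℤ) := ⟨_, rfl⟩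
    have hdm : m + (i : ℤ) * p = (q : ℤ) * k + s := by
      rw [hk, hs]; exact (Int.mul_ediv_add_emod _ _).symm
    have hs0 : 0 ≤ s := hs ▸ Int.emod_nonneg _ (by exact_mod_cast hq.ne')
    have hsq : s < q := hs ▸ Int.emod_lt_of_pos _ (by exact_mod_cast hq)
    have hx : θ + (i : ℝ) * ((p : ℝ) / q) = (k : ℝ) + ((s : ℝ) + u) / q := by
      rw [hθ]
      have : ((m : ℝ) + (i : ℝ) * p) = (q : ℝ) * k + s := by
        exact_mod_cast congrArg (fun z : ℤ => (z : ℝ)) hdm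
      field_simp
      nlinarith [this]
    rw [hx, Int.fract_intCast_add]
    have hin : ((s : ℝ) + u) / q ∈ Set.Ico (0 : ℝ) 1 := by
      constructor
      · positivity
      · rw [div_lt_one hq0]
        have : (s : ℝ) ≤ (q : ℝ) - 1 := by
          have : s ≤ (q : ℤ) - 1 := by omega
          exact_mod_cast this
        linarith
    rw [Int.fract_eq_self.mpr hin]
    have : (F i : ℝ) = (s : ℝ) := by
      rw [hF]
      simp only
      rw [← hs]
      exact_mod_cast congrArg (fun z : ℤ => (z : ℝ)) (Int.toNat_of_nonneg hs0)
    rw [this]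
  have hFmem : ∀ i ∈ Finset.Icc 1 q, F i ∈ Finset.range q := fun i _ =>
    Finset.mem_range.mpr (hFlt i)
  have hFinj : ∀ i ∈ Finset.Icc 1 q, ∀ j ∈ Finset.Icc 1 q, F i = F j → i = j := by
    intro i hi j hj hFij
    have heq : (m + (i : ℤ) * p) % (q : ℤ) = (m + (j : ℤ) * p) % (q : ℤ) := by
      have h2 : 0 ≤ (m + (i : ℤ) * p) % (q : ℤ) :=
        Int.emod_nonneg _ (by exact_mod_cast hq.ne')
      have h3 : 0 ≤ (m + (j : ℤ) * p) % (q : ℤ) :=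
        Int.emod_nonneg _ (by exact_mod_cast hq.ne')
      simp only [hF] at hFij
      omega
    have hdvd : (q : ℤ) ∣ ((i : ℤ) - j) * p := by
      have h4 : (q : ℤ) ∣ (m + (i : ℤ) * p) - (m + (j : ℤ) * p) :=
        Int.emod_eq_emod_iff_emod_sub_eq_zero.mp heq |> Int.dvd_of_emod_eq_zero
      have h5 : (m + (i : ℤ) * p) - (m + (j : ℤ) * p) = ((i : ℤ) - j) * p := by ring
      rwa [h5] at h4
    exact fract_aux_inj p q hq hgcd hi hj hdvd
  have hcard : (Finset.range q).card ≤ (Finset.Icc 1 q).card := by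
    simp [Nat.card_Icc]
  have hFsurj : ∀ b ∈ Finset.range q, ∃ a ha, b = (fun i (_ : i ∈ Finset.Icc 1 q) => F i) a ha :=
    Finset.surj_on_of_inj_on_of_card_le _ hFmem (fun a₁ a₂ h₁ h₂ => hFinj a₁ h₁ a₂ h₂) hcard
  have hbij : ∑ i ∈ Finset.Icc 1 q, Int.fract (θ + i * ((p : ℝ) / q))
      = ∑ s ∈ Finset.range q, ((s : ℝ) + u) / q := by
    refine Finset.sum_bij (fun i (_ : i ∈ Finset.Icc 1 q) => F i) hFmem
      (fun a₁ h₁ a₂ h₂ h => hFinj a₁ h₁ a₂ h₂ h) ?_ hval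
    intro b hb
    obtain ⟨a, ha, hab⟩ := hFsurj b hb
    exact ⟨a, ha, hab.symm⟩
  rw [hbij]
  have hsum : (∑ s ∈ Finset.range q, (s : ℝ)) = q * ((q : ℝ) - 1) / 2 := by
    have h := Finset.sum_range_id_mul_two q
    have h2 : ((∑ s ∈ Finset.range q, s : ℕ) : ℝ) * 2 = (q : ℝ) * (((q : ℕ) - 1 : ℕ) : ℝ) := by
      exact_mod_cast congrArg (fun n : ℕ => (n : ℝ)) h
    rw [Nat.cast_sub hq] at h2
    push_cast at h2 ⊢
    linarith
  calc ∑ s ∈ Finset.range q, ((s : ℝ) + u) / q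
      = (∑ s ∈ Finset.range q, (s : ℝ) + (q : ℕ) * u) / q := by
        rw [← Finset.sum_div, Finset.sum_add_distrib, Finset.sum_const, Finset.card_range,
          nsmul_eq_mul]
  _ = Int.fract ((q : ℝ) * θ) + ((q : ℝ) - 1) / 2 := by
        rw [hsum, hu]
        field_simp
        ring

lemma gauss_Icc (n : ℕ) : (∑ i ∈ Finset.Icc 1 n, (i : ℝ)) = n * (n + 1) / 2 := by
  induction n with
  | zero => simp
  | succ n ih =>
    rw [Finset.sum_Icc_succ_top (by omega : 1 ≤ n + 1), ih]
    push_cast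
    ring

set_option maxHeartbeats 1000000 in
theorem fract_sum_bound (α θ : ℝ) (p : ℤ) (q : ℕ) (hq : 0 < q)
    (hgcd : Int.gcd p q = 1) (happrox : |α - p / q| < 1 / q ^ 2) :
    |∑ i ∈ Finset.Icc 1 q, (Int.fract (θ + i * α) - 1 / 2)| < 3 / 2 := by
  have hq0 : (0 : ℝ) < q := by exact_mod_cast hq
  have hq1 : (1 : ℝ) ≤ q := by exact_mod_cast hq
  obtain ⟨ε, hε⟩ : ∃ ε : ℝ, ε = α - (p : ℝ) / q := ⟨_, rfl⟩
  rw [← hε] at happrox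
  obtain ⟨d, hd⟩ : ∃ d : ℕ → ℤ,
      d = fun i : ℕ => ⌊θ + (i : ℝ) * α⌋ - ⌊θ + (i : ℝ) * ((p : ℝ) / q)⌋ := ⟨_, rfl⟩
  -- basic bound on |i * ε|
  have hie : ∀ i ∈ Finset.Icc 1 q, |(i : ℝ) * ε| < 1 / q := by
    intro i hi
    simp only [Finset.mem_Icc] at hi
    have hiq : (i : ℝ) ≤ q := by exact_mod_cast hi.2
    have hi0 : (0 : ℝ) ≤ i := Nat.cast_nonneg i
    have : |(i : ℝ) * ε| = (i : ℝ) * |ε| := by rw [abs_mul, abs_of_nonneg hi0]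
    rw [this]
    calc (i : ℝ) * |ε| ≤ (q : ℝ) * |ε| := by
          apply mul_le_mul_of_nonneg_right hiq (abs_nonneg _)
    _ < (q : ℝ) * (1 / q ^ 2) := by
          apply mul_lt_mul_of_pos_left happrox hq0
    _ = 1 / q := by field_simp
  -- pointwise decomposition
  have key : ∀ i ∈ Finset.Icc 1 q, Int.fract (θ + (i : ℝ) * α) - 1 / 2
      = (Int.fract (θ + (i : ℝ) * ((p : ℝ) / q)) - 1 / 2) + (i : ℝ) * ε - ((d i : ℤ) : ℝ) := by
    intro i _
    rw [Int.fract, Int.fract, hd]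
    simp only
    push_cast
    rw [hε]
    ring
  -- each |d i| ≤ 1
  have hd1 : ∀ i ∈ Finset.Icc 1 q, |d i| ≤ 1 := by
    intro i hi
    have h1 : ((d i : ℤ) : ℝ) = (i : ℝ) * ε
        - (Int.fract (θ + (i : ℝ) * α) - Int.fract (θ + (i : ℝ) * ((p : ℝ) / q))) := by
      rw [hd]; simp only [Int.fract]; push_cast; rw [hε]; ring
    have hf1 := Int.fract_nonneg (θ + (i : ℝ) * α)
    have hf2 := Int.fract_lt_one (θ + (i : ℝ) * α)
    have hf3 := Int.fract_nonneg (θ + (i : ℝ) * ((p : ℝ) / q))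
    have hf4 := Int.fract_lt_one (θ + (i : ℝ) * ((p : ℝ) / q))
    have hie' := hie i hi
    have habs : |((d i : ℤ) : ℝ)| < 2 := by
      rw [abs_lt] at hie' ⊢
      have h1q : 1 / (q : ℝ) ≤ 1 := by
        rw [div_le_one hq0]; exact hq1
      constructor <;> [nlinarith; nlinarith]
    have h2 : |d i| < 2 := by
      have h3 : ((|d i| : ℤ) : ℝ) < 2 := by rw [Int.cast_abs]; exact habs
      exact_mod_cast h3
    omega
  -- sign information
  have hpos : ∀ i ∈ Finset.Icc 1 q, 1 ≤ d i →
      (1 - (i : ℝ) * ε ≤ Int.fract (θ + (i : ℝ) * ((p : ℝ) / q)) ∧ 0 < ε) := by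
    intro i hi hdi
    simp only [Finset.mem_Icc] at hi
    have hi1 : (1 : ℝ) ≤ i := by exact_mod_cast hi.1
    have hfl : (⌊θ + (i : ℝ) * ((p : ℝ) / q)⌋ : ℝ) + 1 ≤ θ + (i : ℝ) * α := by
      have h1 : (⌊θ + (i : ℝ) * ((p : ℝ) / q)⌋ : ℝ) + 1 ≤ (⌊θ + (i : ℝ) * α⌋ : ℝ) := by
        have : ⌊θ + (i : ℝ) * ((p : ℝ) / q)⌋ + 1 ≤ ⌊θ + (i : ℝ) * α⌋ := by
          simp only [hd] at hdi; omega
        exact_mod_cast this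
      linarith [Int.floor_le (θ + (i : ℝ) * α)]
    have hkey : 1 - (i : ℝ) * ε ≤ Int.fract (θ + (i : ℝ) * ((p : ℝ) / q)) := by
      rw [Int.fract]
      have : θ + (i : ℝ) * α = θ + (i : ℝ) * ((p : ℝ) / q) + (i : ℝ) * ε := by
        rw [hε]; ring
      rw [this] at hfl
      linarith
    refine ⟨hkey, ?_⟩
    have := Int.fract_lt_one (θ + (i : ℝ) * ((p : ℝ) / q))
    have hiε : 0 < (i : ℝ) * ε := by linarith
    nlinarith [hiε, hi1]
  have hneg : ∀ i ∈ Finset.Icc 1 q, d i ≤ -1 →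
      (Int.fract (θ + (i : ℝ) * ((p : ℝ) / q)) < -((i : ℝ) * ε) ∧ ε < 0) := by
    intro i hi hdi
    simp only [Finset.mem_Icc] at hi
    have hi1 : (1 : ℝ) ≤ i := by exact_mod_cast hi.1
    have hfl : θ + (i : ℝ) * α < (⌊θ + (i : ℝ) * ((p : ℝ) / q)⌋ : ℝ) := by
      have h1 : (⌊θ + (i : ℝ) * α⌋ : ℝ) + 1 ≤ (⌊θ + (i : ℝ) * ((p : ℝ) / q)⌋ : ℝ) := by
        have : ⌊θ + (i : ℝ) * α⌋ + 1 ≤ ⌊θ + (i : ℝ) * ((p : ℝ) / q)⌋ := by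
          simp only [hd] at hdi; omega
        exact_mod_cast this
      linarith [Int.lt_floor_add_one (θ + (i : ℝ) * α)]
    have hkey : Int.fract (θ + (i : ℝ) * ((p : ℝ) / q)) < -((i : ℝ) * ε) := by
      rw [Int.fract]
      have : θ + (i : ℝ) * α = θ + (i : ℝ) * ((p : ℝ) / q) + (i : ℝ) * ε := by
        rw [hε]; ring
      rw [this] at hfl
      linarith
    refine ⟨hkey, ?_⟩
    have := Int.fract_nonneg (θ + (i : ℝ) * ((p : ℝ) / q))
    have hiε : (i : ℝ) * ε < 0 := by linarith
    nlinarith [hiε, hi1]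
  -- at most one i with d i ≠ 0
  have huniq : ∀ i ∈ Finset.Icc 1 q, ∀ j ∈ Finset.Icc 1 q, d i ≠ 0 → d j ≠ 0 → i = j := by
    intro i hi j hj hdi hdj
    by_contra hij
    have hsep := fract_sep p q hq hgcd θ hi hj hij
    have hiei := hie i hi
    have hiej := hie j hj
    rw [abs_lt] at hiei hiej
    have hdi1 := hd1 i hi
    have hdj1 := hd1 j hj
    have hfi0 := Int.fract_nonneg (θ + (i : ℝ) * ((p : ℝ) / q))
    have hfi1 := Int.fract_lt_one (θ + (i : ℝ) * ((p : ℝ) / q))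
    have hfj0 := Int.fract_nonneg (θ + (j : ℝ) * ((p : ℝ) / q))
    have hfj1 := Int.fract_lt_one (θ + (j : ℝ) * ((p : ℝ) / q))
    rcases lt_or_lt_iff_ne.mpr hdi with hdi' | hdi'
    · -- d i ≤ -1
      have hi' := hneg i hi (by omega)
      have hε0 := hi'.2
      have hj' : d j ≤ -1 := by
        by_contra h
        have : 1 ≤ d j := by omega
        exact absurd (hpos j hj this).2 (by linarith)
      have hj'' := hneg j hj hj'
      have h1 : Int.fract (θ + (i : ℝ) * ((p : ℝ) / q)) < 1 / q := by
        linarith [hi'.1, hiei.1]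
      have h2 : Int.fract (θ + (j : ℝ) * ((p : ℝ) / q)) < 1 / q := by
        linarith [hj''.1, hiej.1]
      have : |Int.fract (θ + (i : ℝ) * ((p : ℝ) / q))
          - Int.fract (θ + (j : ℝ) * ((p : ℝ) / q))| < 1 / q := by
        rw [abs_lt]; constructor <;> linarith
      linarith
    · -- d i ≥ 1
      have hi' := hpos i hi (by omega)
      have hε0 := hi'.2
      have hj' : 1 ≤ d j := by
        by_contra h
        have : d j ≤ -1 := by omega
        exact absurd (hneg j hj this).2 (by linarith)
      have hj'' := hpos j hj hj'
      have h1 : 1 - 1 / (q : ℝ) < Int.fract (θ + (i : ℝ) * ((p : ℝ) / q)) := by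
        linarith [hi'.1, hiei.2]
      have h2 : 1 - 1 / (q : ℝ) < Int.fract (θ + (j : ℝ) * ((p : ℝ) / q)) := by
        linarith [hj''.1, hiej.2]
      have : |Int.fract (θ + (i : ℝ) * ((p : ℝ) / q))
          - Int.fract (θ + (j : ℝ) * ((p : ℝ) / q))| < 1 / q := by
        rw [abs_lt]; constructor <;> linarith
      linarith
  have gauss := gauss_Icc q
  obtain ⟨T, hT⟩ : ∃ T : ℝ, T = (q : ℝ) * (q + 1) / 2 := ⟨_, rfl⟩
  have hTpos : 0 < T := by rw [hT]; positivity
  have hε2 : |ε| * (q : ℝ) ^ 2 < 1 := by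
    have := happrox
    rw [lt_div_iff₀ (by positivity)] at this
    exact this
  have hTε : T * |ε| < 1 := by
    rw [hT]
    nlinarith [hε2, hq1, abs_nonneg ε]
  have hub : T * ε < 1 :=
    lt_of_le_of_lt (mul_le_mul_of_nonneg_left (le_abs_self ε) hTpos.le) hTε
  have hlb : -1 < T * ε := by
    have h := mul_le_mul_of_nonneg_left (neg_abs_le ε) hTpos.le
    linarith
  obtain ⟨u, hu⟩ : ∃ u : ℝ, u = Int.fract ((q : ℝ) * θ) := ⟨_, rfl⟩
  have hu0 : 0 ≤ u := hu ▸ Int.fract_nonneg _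
  have hu1 : u < 1 := hu ▸ Int.fract_lt_one _
  -- split the sum
  have hsplit : ∑ i ∈ Finset.Icc 1 q, (Int.fract (θ + i * α) - 1 / 2)
      = (u - 1 / 2) + T * ε - ((∑ i ∈ Finset.Icc 1 q, d i : ℤ) : ℝ) := by
    rw [Finset.sum_congr rfl key]
    rw [Finset.sum_sub_distrib, Finset.sum_add_distrib, Finset.sum_sub_distrib,
      fract_sum_eq p q hq hgcd θ, Finset.sum_const, Nat.card_Icc, ← Finset.sum_mul, gauss,
      ← hu, hT]
    push_cast
    ring
  rw [hsplit]
  by_cases hall : ∀ i ∈ Finset.Icc 1 q, d i = 0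
  · rw [Finset.sum_eq_zero hall]
    rw [abs_lt]
    push_cast
    constructor <;> linarith
  · push_neg at hall
    obtain ⟨i₀, hi₀, hdi₀⟩ := hall
    have hDe : ∑ i ∈ Finset.Icc 1 q, d i = d i₀ := by
      apply Finset.sum_eq_single_of_mem i₀ hi₀
      intro j hj hne
      by_contra h
      exact hne (huniq j hj i₀ hi₀ h hdi₀)
    rw [hDe]
    have hdb := hd1 i₀ hi₀
    have : d i₀ = 1 ∨ d i₀ = -1 := by
      rcases abs_le.mp hdb with ⟨ha, hb⟩
      omega
    rcases this with h1 | h1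
    · have hε0 : 0 < ε := (hpos i₀ hi₀ (by omega)).2
      have hTe0 : 0 < T * ε := mul_pos hTpos hε0
      rw [h1, abs_lt]
      push_cast
      constructor <;> linarith
    · have hd1' : d i₀ ≤ -1 := le_of_eq h1
      have hε0 : ε < 0 := (hneg i₀ hi₀ hd1').2
      have hTe0 : T * ε < 0 := mul_neg_of_pos_of_neg hTpos hε0
      rw [h1, abs_lt]
      push_cast
      constructor <;> linarith
end

section
/- If n ≥ 1 has Zeckendorf representation n = Σ_{s=1}^{m} b_s F_s with b_m = 1, then m ≤ ⌊(log n + 1)/log(1+ω)⌋ and the number of nonzero digits Σ b_s is at most ⌊(log n + 1)/log(2+ω)⌋, where ω = (√5 − 1)/2. -/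
open Finset

local notation "φ" => Real.goldenRatio

lemma phi_pow_le_fib : ∀ k : ℕ, φ ^ k ≤ (Nat.fib (k + 2) : ℝ) := by
  intro k
  induction k using Nat.strong_induction_on with
  | _ k ih =>
    match k with
    | 0 => simp
    | 1 =>
      have h5 : Real.sqrt 5 ≤ 2.24 := by
        rw [show (2.24:ℝ) = Real.sqrt (2.24^2) by rw [Real.sqrt_sq (by norm_num)]]
        exact Real.sqrt_le_sqrt (by norm_num)
      have : (Nat.fib 3 : ℝ) = 2 := by norm_num [Nat.fib]
      rw [this, pow_one, Real.goldenRatio]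
      linarith
    | (j+2) =>
      have h1 := ih j (by omega)
      have h2 := ih (j+1) (by omega)
      have hpow : φ ^ (j+2) = φ ^ (j+1) + φ ^ j := by
        have : φ ^ (j+2) = φ ^ j * φ ^ 2 := by ring
        rw [this, Real.goldenRatio_sq]
        ring
      rw [hpow, show j + 2 + 2 = (j + 2) + 2 from rfl, Nat.fib_add_two]
      push_cast
      linarith

lemma key_bound (b : ℕ → ℕ) (hb : ∀ s, b s ≤ 1) (hnc : ∀ s, b s = 1 → b (s + 1) = 0) :
    ∀ m : ℕ, 2 * (∑ s ∈ Icc 1 m, b s) ≤ m + 1 ∧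
      Nat.fib (2 * ∑ s ∈ Icc 1 m, b s) ≤ ∑ s ∈ Icc 1 m, b s * Nat.fib s := by
  intro m
  induction m using Nat.strong_induction_on with
  | _ m ih =>
    match m with
    | 0 => simp
    | 1 =>
      have := hb 1
      interval_cases h : b 1 <;> simp [h]
    | (m+2) =>
      have hIH := ih (m+1) (by omega)
      have hsum1 : ∑ s ∈ Icc 1 (m+2), b s = (∑ s ∈ Icc 1 (m+1), b s) + b (m+2) :=
        Finset.sum_Icc_succ_top (by omega) _
      have hsum2 : ∑ s ∈ Icc 1 (m+2), b s * Nat.fib s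
          = (∑ s ∈ Icc 1 (m+1), b s * Nat.fib s) + b (m+2) * Nat.fib (m+2) :=
        Finset.sum_Icc_succ_top (by omega) _
      rcases Nat.le_one_iff_eq_zero_or_eq_one.mp (hb (m+2)) with h2 | h2
      · rw [hsum1, hsum2, h2]
        simp only [add_zero, zero_mul]
        exact ⟨by omega, hIH.2⟩
      · -- b (m+2) = 1, so b (m+1) = 0
        have hm1 : b (m+1) = 0 := by
          rcases Nat.le_one_iff_eq_zero_or_eq_one.mp (hb (m+1)) with h | h
          · exact h
          · have h0 := hnc (m+1) h
            rw [show m+1+1 = m+2 by omega] at h0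
            omega
        have hIH0 := ih m (by omega)
        have hsum1' : ∑ s ∈ Icc 1 (m+1), b s = ∑ s ∈ Icc 1 m, b s := by
          rw [Finset.sum_Icc_succ_top (by omega), hm1]
          simp
        have hsum2' : ∑ s ∈ Icc 1 (m+1), b s * Nat.fib s
            = ∑ s ∈ Icc 1 m, b s * Nat.fib s := by
          rw [Finset.sum_Icc_succ_top (by omega), hm1]
          simp
        rw [hsum1, hsum2, hsum1', hsum2', h2]
        constructor
        · omega
        · have hS := hIH0.1
          have hfib : Nat.fib (2 * (∑ s ∈ Icc 1 m, b s) + 1) ≤ Nat.fib (m+2) :=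
            Nat.fib_mono (by omega)
          have : 2 * ((∑ s ∈ Icc 1 m, b s) + 1)
              = (2 * (∑ s ∈ Icc 1 m, b s) + 1) + 1 := by omega
          rw [this, Nat.fib_add_two]
          have := hIH0.2
          omega

lemma gold_sq_lt_exp : φ ^ 2 ≤ Real.exp 1 := by
  have h9 := Real.exp_one_gt_d9
  have h5 : Real.sqrt 5 ≤ 2.24 := by
    rw [show (2.24:ℝ) = Real.sqrt (2.24^2) by rw [Real.sqrt_sq (by norm_num)]]
    exact Real.sqrt_le_sqrt (by norm_num)
  have hnn := Real.sqrt_nonneg 5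
  rw [Real.goldenRatio]
  nlinarith

lemma main_real (j n : ℕ) (hn : 1 ≤ n) (hfib : Nat.fib j ≤ n) :
    (j : ℝ) * Real.log φ ≤ Real.log n + 1 := by
  have hφ : (1:ℝ) < φ := Real.one_lt_goldenRatio
  have hn' : (1:ℝ) ≤ (n:ℝ) := by exact_mod_cast hn
  have hpow : φ ^ j ≤ φ ^ 2 * n := by
    rcases Nat.lt_or_ge j 2 with h | h
    · interval_cases j
      · nlinarith
      · nlinarith
    · have hle := phi_pow_le_fib (j - 2)
      rw [show j - 2 + 2 = j by omega] at hle
      have hfn : (Nat.fib j : ℝ) ≤ (n:ℝ) := by exact_mod_cast hfib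
      calc φ ^ j = φ ^ 2 * φ ^ (j-2) := by rw [← pow_add]; congr 1; omega
        _ ≤ φ ^ 2 * n := by nlinarith
  have h1 : Real.log (φ ^ j) = (j:ℝ) * Real.log φ := Real.log_pow φ j
  have h2 : Real.log (φ ^ j) ≤ Real.log (φ ^ 2 * n) :=
    Real.log_le_log (pow_pos (by linarith) j) hpow
  have h3 : Real.log (φ ^ 2 * n) = Real.log (φ ^ 2) + Real.log n :=
    Real.log_mul (by positivity) (by positivity)
  have h4 : Real.log (φ ^ 2) ≤ 1 := by
    calc Real.log (φ ^ 2) ≤ Real.log (Real.exp 1) :=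
          Real.log_le_log (by positivity) gold_sq_lt_exp
      _ = 1 := Real.log_exp 1
  linarith

theorem zeckendorf_length (n m : ℕ) (b : ℕ → ℕ) (hn : 1 ≤ n)
    (hb : ∀ s, b s ≤ 1) (hbm : b m = 1) (hhi : ∀ s, m < s → b s = 0)
    (hnoconsec : ∀ s, b s = 1 → b (s + 1) = 0)
    (hsum : n = ∑ s ∈ Finset.Icc 1 m, b s * Nat.fib s) :
    (m : ℤ) ≤ ⌊(Real.log n + 1) / Real.log (1 + (Real.sqrt 5 - 1) / 2)⌋ ∧
      ((∑ s ∈ Finset.Icc 1 m, b s : ℕ) : ℤ) ≤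
        ⌊(Real.log n + 1) / Real.log (2 + (Real.sqrt 5 - 1) / 2)⌋ := by
  have hφ : (1:ℝ) < φ := Real.one_lt_goldenRatio
  have hlogφ : 0 < Real.log φ := Real.log_pos hφ
  have hω1 : 1 + (Real.sqrt 5 - 1) / 2 = φ := by rw [Real.goldenRatio]; ring
  have hω2 : 2 + (Real.sqrt 5 - 1) / 2 = φ ^ 2 := by rw [Real.goldenRatio_sq, Real.goldenRatio]; ring
  have hlogsq : Real.log (φ ^ 2) = 2 * Real.log φ := by
    rw [Real.log_pow]; push_cast; ring
  have hm1 : 1 ≤ m := by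
    by_contra h
    have : m = 0 := by omega
    subst this
    simp at hsum
    omega
  have hfm : Nat.fib m ≤ n := by
    rw [hsum]
    have h := Finset.single_le_sum (f := fun s => b s * Nat.fib s)
      (fun i _ => Nat.zero_le _) (Finset.mem_Icc.mpr ⟨hm1, le_refl m⟩)
    simpa [hbm] using h
  constructor
  · rw [hω1, Int.le_floor]
    push_cast
    rw [le_div_iff₀ hlogφ]
    exact main_real m n hn hfm
  · set k := ∑ s ∈ Icc 1 m, b s with hk
    have hkey := key_bound b hb hnoconsec m
    have hfk : Nat.fib (2 * k) ≤ n := by rw [hsum]; exact hkey.2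
    rw [hω2, Int.le_floor]
    push_cast
    rw [le_div_iff₀ (by rw [hlogsq]; linarith), hlogsq]
    have := main_real (2 * k) n hn hfk
    push_cast at this
    linarith
end

section
/- For every integer n ≥ 1 and real φ with nφ not an integer multiple of π, Σ_{r=0}^{n-1} cot(φ + πr/n) = n·cot(nφ). -/
open Real Finset

/-- Sum of a geometric progression over an n-th root of unity power. -/
lemma aux_sum_zeta {n : ℕ} {ζ : ℂ} (hζ : IsPrimitiveRoot ζ n) (hn : 0 < n)
    (k : ℕ) (hk0 : 0 < k) (hkn : k < n) :
    ∑ r ∈ Finset.range n, (ζ ^ k) ^ r = 0 := by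
  have h1 : ζ ^ k ≠ 1 := hζ.pow_ne_one_of_pos_of_lt hk0.ne' hkn
  rw [geom_sum_eq h1]
  have : (ζ ^ k) ^ n = 1 := by
    rw [← pow_mul, mul_comm, pow_mul, hζ.pow_eq_one, one_pow]
  simp [this]

/-- The key partial fraction identity. -/
lemma aux_key {n : ℕ} (hn : 0 < n) {ζ x : ℂ} (hζ : IsPrimitiveRoot ζ n)
    (hx : x ^ n ≠ 1) :
    ∑ r ∈ Finset.range n, 1 / (1 - x * ζ ^ r) = n / (1 - x ^ n) := by
  have hxr : ∀ r : ℕ, 1 - x * ζ ^ r ≠ 0 := by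
    intro r h
    apply hx
    have : x * ζ ^ r = 1 := by linear_combination -h
    calc x ^ n = (x * ζ ^ r) ^ n := by
          rw [mul_pow, ← pow_mul, mul_comm r n, pow_mul, hζ.pow_eq_one, one_pow, mul_one]
      _ = 1 := by rw [this, one_pow]
  have hxn : 1 - x ^ n ≠ 0 := fun h => hx (by linear_combination -h)
  rw [eq_div_iff hxn, sum_mul]
  have step : ∀ r ∈ Finset.range n,
      1 / (1 - x * ζ ^ r) * (1 - x ^ n) = ∑ k ∈ Finset.range n, (x * ζ ^ r) ^ k := by
    intro r _
    have h1 : (x * ζ ^ r) ^ n = x ^ n := by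
      rw [mul_pow, ← pow_mul, mul_comm r n, pow_mul, hζ.pow_eq_one, one_pow, mul_one]
    have h2 := geom_sum_mul (x * ζ ^ r) n
    rw [h1] at h2
    field_simp [hxr r]
    linear_combination h2
  rw [Finset.sum_congr rfl step, Finset.sum_comm]
  have : ∀ k ∈ Finset.range n,
      (∑ r ∈ Finset.range n, (x * ζ ^ r) ^ k) = if k = 0 then (n : ℂ) else 0 := by
    intro k hk
    rw [Finset.mem_range] at hk
    rcases Nat.eq_zero_or_pos k with h0 | h0
    · simp [h0]
    · rw [if_neg h0.ne']
      have : ∀ r : ℕ, (x * ζ ^ r) ^ k = x ^ k * (ζ ^ k) ^ r := by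
        intro r; rw [mul_pow, ← pow_mul, mul_comm r k, pow_mul]
      simp only [this, ← Finset.mul_sum, aux_sum_zeta hζ hn k h0 hk, mul_zero]
  rw [Finset.sum_congr rfl this, Finset.sum_ite_eq' (Finset.range n) 0 (fun _ => (n : ℂ))]
  simp [Finset.mem_range.mpr hn]

theorem cot_sum (n : ℕ) (hn : 1 ≤ n) (φ : ℝ) (h : ∀ k : ℤ, (n : ℝ) * φ ≠ k * π) :
    ∑ r ∈ Finset.range n, Real.cot (φ + π * r / n) = n * Real.cot (n * φ) := by
  have hn0 : 0 < n := hn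
  have hnR : (n : ℂ) ≠ 0 := Nat.cast_ne_zero.mpr hn0.ne'
  -- pass to ℂ
  apply Complex.ofReal_injective
  push_cast [Complex.ofReal_cot]
  set ζ : ℂ := Complex.exp (2 * π * Complex.I / n) with hζdef
  have hζ : IsPrimitiveRoot ζ n := Complex.isPrimitiveRoot_exp n hn0.ne'
  set x : ℂ := Complex.exp (2 * Complex.I * φ) with hxdef
  have hxn : x ^ n = Complex.exp (2 * Complex.I * (n * φ)) := by
    rw [hxdef, ← Complex.exp_nat_mul]; ring_nf
  have hx1 : x ^ n ≠ 1 := by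
    rw [hxn]
    intro hh
    rw [Complex.exp_eq_one_iff] at hh
    obtain ⟨k, hk⟩ := hh
    apply h k
    have : (2 : ℂ) * Complex.I * ((n : ℝ) * φ) = 2 * Complex.I * ((k : ℝ) * π) := by
      push_cast at hk ⊢; rw [hk]; ring
    have h2 : ((n : ℝ) * φ : ℂ) = ((k : ℝ) * π : ℂ) := by
      field_simp at this
      exact_mod_cast this
    exact_mod_cast h2
  -- each term
  have hterm : ∀ r : ℕ, Complex.cot (↑φ + ↑π * r / n) = (x * ζ ^ r + 1) /
      (Complex.I * (1 - x * ζ ^ r)) := by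
    intro r
    rw [Complex.cot_eq_exp_ratio]
    congr 2 <;>
    · rw [hxdef, hζdef, ← Complex.exp_nat_mul, ← Complex.exp_add]
      ring_nf
  have hxr : ∀ r : ℕ, 1 - x * ζ ^ r ≠ 0 := by
    intro r hr
    apply hx1
    have : x * ζ ^ r = 1 := by linear_combination -hr
    calc x ^ n = (x * ζ ^ r) ^ n := by
          rw [mul_pow, ← pow_mul, mul_comm r n, pow_mul, hζ.pow_eq_one, one_pow, mul_one]
      _ = 1 := by rw [this, one_pow]
  have hxn0 : 1 - x ^ n ≠ 0 := fun hh => hx1 (by linear_combination -hh)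
  have key := aux_key hn0 hζ hx1
  calc ∑ r ∈ Finset.range n, Complex.cot (↑φ + ↑π * r / n)
      = ∑ r ∈ Finset.range n, (Complex.I - 2 * Complex.I * (1 / (1 - x * ζ ^ r))) := by
        apply Finset.sum_congr rfl
        intro r _
        rw [hterm r]
        have := hxr r
        field_simp
        linear_combination (1 - x ^ 2 * ζ ^ (r * 2) + x * ζ ^ r + x ^ 2 * ζ ^ (r * 2)) * Complex.I_sq
    _ = n * Complex.I - 2 * Complex.I * (n / (1 - x ^ n)) := by
        rw [Finset.sum_sub_distrib, ← Finset.mul_sum, key]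
        simp [mul_comm]
    _ = n * Complex.cot (n * φ) := by
        rw [show ((n : ℂ) * φ) = ((n * φ : ℝ) : ℂ) by push_cast; ring]
        rw [Complex.cot_eq_exp_ratio]
        rw [show (2 * Complex.I * ((n * φ : ℝ) : ℂ)) = 2 * Complex.I * ((n : ℂ) * φ) by
          push_cast; ring]
        rw [← hxn]
        have hI : Complex.I ≠ 0 := Complex.I_ne_zero
        field_simp
        ring_nf
        rw [Complex.I_sq]
        ring
end

section
/- For every even integer n ≥ 2, ∏_{r=1, r≠n/2}^{n-1} 2 sin(2πr/n) = (−1)^{n/2 − 1} · n²/4. -/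
open Real Finset

lemma abs_one_sub_exp (θ : ℝ) : ‖(1 - Complex.exp (θ * Complex.I))‖ = 2 * |Real.sin (θ/2)| := by
  have h : (1 : ℂ) - Complex.exp (θ * Complex.I) = Complex.ofReal (1 - Real.cos θ) + Complex.ofReal (- Real.sin θ) * Complex.I := by
    rw [Complex.exp_mul_I]
    push_cast
    ring
  rw [h, Complex.norm_add_mul_I]
  have h2 : (1 - Real.cos θ)^2 + (-Real.sin θ)^2 = (2 * Real.sin (θ/2))^2 := by
    have h1 := Real.sin_sq_add_cos_sq θ
    have h3 : Real.cos θ = Real.cos (θ/2)^2 - Real.sin (θ/2)^2 := by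
      rw [← Real.cos_two_mul']; ring_nf
    have h4 := Real.sin_sq_add_cos_sq (θ/2)
    nlinarith
  rw [h2, Real.sqrt_sq_eq_abs, abs_mul]
  norm_num

lemma prod_two_sin (m : ℕ) (hm : 1 ≤ m) :
    ∏ k ∈ Finset.Icc 1 (m-1), 2 * Real.sin (π * k / m) = m := by
  obtain ⟨n, rfl⟩ := Nat.exists_eq_add_of_le hm
  have hμ := Complex.isPrimitiveRoot_exp (n+1) (Nat.succ_ne_zero n)
  have key := hμ.prod_one_sub_pow_eq_order
  apply_fun (‖·‖) at key
  rw [norm_prod] at key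
  have habs : ‖((n : ℂ) + 1)‖ = (n : ℝ) + 1 := by
    rw [← Complex.ofReal_natCast, ← Complex.ofReal_one, ← Complex.ofReal_add,
      Complex.norm_real, Real.norm_eq_abs, abs_of_nonneg (by positivity)]
  rw [habs] at key
  have hIcc : Finset.Icc 1 (1 + n - 1) = (Finset.range n).map
      ⟨fun k => k + 1, add_left_injective 1⟩ := by
    ext x
    simp only [Finset.mem_Icc, Finset.mem_map, Finset.mem_range, Function.Embedding.coeFn_mk]
    constructor
    · rintro ⟨h1, h2⟩; exact ⟨x - 1, by omega, by omega⟩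
    · rintro ⟨b, hb, rfl⟩; omega
  rw [hIcc, Finset.prod_map]
  simp only [Function.Embedding.coeFn_mk]
  have hne : ((n:ℂ)+1) ≠ 0 := by
    have := Nat.cast_add_one_ne_zero (R := ℂ) n
    simpa using this
  have hterm : ∀ k ∈ Finset.range n,
      ‖(1 - Complex.exp (2 * (π:ℝ) * Complex.I / ((n+1 : ℕ) : ℂ)) ^ (k+1))‖ =
        2 * Real.sin (π * ((k+1 : ℕ) : ℝ) / ((1 + n : ℕ) : ℝ)) := by
    intro k hk
    rw [Finset.mem_range] at hk
    have hμk : Complex.exp (2 * (π:ℝ) * Complex.I / ((n+1 : ℕ) : ℂ)) ^ (k+1) =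
        Complex.exp ((2 * π * (k+1) / (n+1) : ℝ) * Complex.I) := by
      rw [← Complex.exp_nat_mul]
      congr 1
      push_cast
      field_simp
    rw [hμk, abs_one_sub_exp]
    have harg : (2 * π * (↑k+1) / (↑n+1) : ℝ) / 2 = π * (↑k + 1) / (↑n + 1) := by ring
    rw [harg, abs_of_nonneg]
    · push_cast; ring_nf
    · apply Real.sin_nonneg_of_nonneg_of_le_pi
      · positivity
      · rw [div_le_iff₀ (by positivity)]
        nlinarith [Real.pi_pos, (by exact_mod_cast hk : (k:ℝ) < n)]
  rw [Finset.prod_congr rfl (fun k hk => (hterm k hk).symm), key]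
  push_cast; ring

theorem sin_prod_even_val (n : ℕ) (hn : 2 ≤ n) (heven : Even n) :
    ∏ r ∈ (Finset.Icc 1 (n - 1)).erase (n / 2), 2 * Real.sin (2 * π * r / n) =
      (-1) ^ (n / 2 - 1) * ((n : ℝ) ^ 2 / 4) := by
  obtain ⟨m, hm⟩ := heven
  have hm1 : 1 ≤ m := by omega
  have hndiv : n / 2 = m := by omega
  have hmne : (m : ℝ) ≠ 0 := by positivity
  subst hm
  rw [hndiv]
  have hsplit : (Finset.Icc 1 (m + m - 1)).erase m =
      Finset.Icc 1 (m-1) ∪ Finset.Icc (m+1) (m+m-1) := by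
    ext x
    simp only [Finset.mem_erase, Finset.mem_Icc, Finset.mem_union]
    omega
  have hdisj : Disjoint (Finset.Icc 1 (m-1)) (Finset.Icc (m+1) (m+m-1)) := by
    rw [Finset.disjoint_left]
    intro a ha hb
    rw [Finset.mem_Icc] at ha hb
    omega
  rw [hsplit, Finset.prod_union hdisj]
  -- first product
  have h1 : ∏ r ∈ Finset.Icc 1 (m-1), 2 * Real.sin (2 * π * r / (m+m : ℕ)) = m := by
    rw [← prod_two_sin m hm1]
    apply Finset.prod_congr rfl
    intro k hk
    congr 1
    have h2m : ((m+m:ℕ):ℝ) = 2 * m := by push_cast; ring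
    have hmpos : (0:ℝ) < m := by exact_mod_cast hm1
    congr 1
    rw [h2m, div_eq_div_iff (by positivity) (by positivity)]
    ring
  -- second product
  have hIcc2 : Finset.Icc (m+1) (m+m-1) = (Finset.Icc 1 (m-1)).map
      ⟨fun k => k + m, add_left_injective m⟩ := by
    ext x
    simp only [Finset.mem_Icc, Finset.mem_map, Function.Embedding.coeFn_mk]
    constructor
    · rintro ⟨h1, h2⟩; exact ⟨x - m, by omega, by omega⟩
    · rintro ⟨b, hb, rfl⟩; omega
  have h2 : ∏ r ∈ Finset.Icc (m+1) (m+m-1), 2 * Real.sin (2 * π * r / (m+m : ℕ)) =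
      (-1 : ℝ)^(m-1) * m := by
    rw [hIcc2, Finset.prod_map]
    simp only [Function.Embedding.coeFn_mk]
    have hterm : ∀ k ∈ Finset.Icc 1 (m-1),
        2 * Real.sin (2 * π * ((k + m : ℕ) : ℝ) / ((m+m : ℕ) : ℝ)) =
          -(2 * Real.sin (π * k / m)) := by
      intro k hk
      have harg : 2 * π * ((k + m : ℕ) : ℝ) / ((m+m : ℕ) : ℝ) = π * k / m + π := by
        push_cast
        field_simp
        ring
      rw [harg, Real.sin_add_pi]
      ring
    rw [Finset.prod_congr rfl hterm]
    trans ∏ x ∈ Finset.Icc 1 (m-1), (-1:ℝ) * (2 * Real.sin (π * x / m))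
    · exact Finset.prod_congr rfl fun x _ => by ring
    · rw [Finset.prod_mul_distrib, Finset.prod_const, prod_two_sin m hm1, Nat.card_Icc]
      norm_num
  rw [h1, h2]
  push_cast
  ring
end

section
/- Let ω = (√5 − 1)/2 and define P_n = ∏_{r=1}^{n} |2 sin(πrω)|. If the subsequence P_{F_n} converges to a constant c > 0 (where F_n is the n-th Fibonacci number), then P_{F_n − 1}/F_n converges to c√5/(2π). -/
open Real Finset Filter

noncomputable def om : ℝ := (Real.sqrt 5 - 1) / 2

lemma sqrt5_sq : Real.sqrt 5 ^ 2 = 5 := Real.sq_sqrt (by norm_num)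

lemma sqrt5_pos : (0:ℝ) < Real.sqrt 5 := Real.sqrt_pos.mpr (by norm_num)

lemma om_pos : 0 < om := by
  have h : (2:ℝ) < Real.sqrt 5 := by
    nlinarith [sqrt5_sq, sqrt5_pos]
  unfold om; linarith

lemma om_lt_one : om < 1 := by
  have h : Real.sqrt 5 < 3 := by
    nlinarith [sqrt5_sq, sqrt5_pos]
  unfold om; linarith

lemma om_sq : om ^ 2 = 1 - om := by
  unfold om; nlinarith [sqrt5_sq]

lemma fib_om : ∀ n : ℕ, (Nat.fib (n+1) : ℝ) * om = Nat.fib n - (-om) ^ (n+1) := by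
  intro n
  induction n using Nat.twoStepInduction with
  | zero => simp
  | one =>
    have h := om_sq
    simp [Nat.fib]
    nlinarith [h]
  | more n ih2 ih1 =>
    have hf : (Nat.fib (n+3) : ℝ) = Nat.fib (n+2) + Nat.fib (n+1) := by
      rw [show n+3 = (n+1)+2 by ring, Nat.fib_add_two]; push_cast; ring
    have hf2 : (Nat.fib (n+2) : ℝ) = Nat.fib (n+1) + Nat.fib n := by
      rw [Nat.fib_add_two]; push_cast; ring
    linear_combination om * hf + ih1 + ih2 - hf2 + (-om)^(n+1) * om_sq

theorem PFn_sub_one_div_Fn_tendsto (c : ℝ) (hc : 0 < c)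
    (P : ℕ → ℝ)
    (hP : ∀ n, P n = ∏ r ∈ Finset.Icc 1 n, |2 * Real.sin (π * r * ((Real.sqrt 5 - 1) / 2))|)
    (hconv : Filter.Tendsto (fun n => P (Nat.fib n)) Filter.atTop (nhds c)) :
    Filter.Tendsto (fun n => P (Nat.fib n - 1) / (Nat.fib n : ℝ)) Filter.atTop
      (nhds (c * Real.sqrt 5 / (2 * π))) := by
  have hom_pos := om_pos
  have hom_lt := om_lt_one
  -- key product identity: for n ≥ 2, P (fib n) = P (fib n - 1) * (2 * sin (π * om^n))
  have hsin_pos : ∀ n : ℕ, 1 ≤ n → 0 < Real.sin (π * om ^ n) := by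
    intro n hn
    apply Real.sin_pos_of_pos_of_lt_pi
    · positivity
    · have h1 : om ^ n < 1 := by
        calc om ^ n ≤ om ^ 1 := pow_le_pow_of_le_one (le_of_lt hom_pos) (le_of_lt hom_lt) hn
        _ = om := pow_one om
        _ < 1 := hom_lt
      nlinarith [Real.pi_pos]
  have key : ∀ n : ℕ, 2 ≤ n → P (Nat.fib n) = P (Nat.fib n - 1) * (2 * Real.sin (π * om ^ n)) := by
    intro n hn
    have hfib1 : 1 ≤ Nat.fib n := Nat.fib_pos.mpr (by omega)
    obtain ⟨m, hm⟩ : ∃ m, Nat.fib n = m + 1 := ⟨Nat.fib n - 1, by omega⟩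
    have hsplit : P (Nat.fib n) = P m * |2 * Real.sin (π * (Nat.fib n) * om)| := by
      rw [hP, hP, hm]
      rw [Finset.prod_Icc_succ_top (by omega : 1 ≤ m + 1)]
      rw [← hm]
      rfl
    have habs : |2 * Real.sin (π * (Nat.fib n) * om)| = 2 * Real.sin (π * om ^ n) := by
      obtain ⟨k, hk⟩ : ∃ k, n = k + 1 := ⟨n - 1, by omega⟩
      have h1 : (Nat.fib (k+1) : ℝ) * om = Nat.fib k - (-om)^(k+1) := fib_om k
      have h2 : π * (Nat.fib n) * om = (Nat.fib k : ℝ) * π - π * (-om)^n := by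
        rw [hk]; linear_combination π * h1
      rw [h2, Real.sin_nat_mul_pi_sub]
      have h3 : |(2:ℝ) * -((-1) ^ (Nat.fib k) * Real.sin (π * (-om)^n))|
          = 2 * |Real.sin (π * (-om)^n)| := by
        simp [abs_mul, abs_pow]
      rw [h3]
      congr 1
      rcases Nat.even_or_odd n with he | ho
      · rw [he.neg_pow om, abs_of_pos (hsin_pos n (by omega))]
      · rw [ho.neg_pow om, show π * -om ^ n = -(π * om ^ n) by ring, Real.sin_neg, abs_neg,
          abs_of_pos (hsin_pos n (by omega))]
    rw [hsplit, habs, hm]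
    simp
  -- limit of fib n * om ^ n
  have hA : Tendsto (fun n : ℕ => (Nat.fib n : ℝ) * om ^ n) atTop (nhds (1 / Real.sqrt 5)) := by
    have hgoldom : goldenRatio * om = 1 := by
      unfold om goldenRatio; nlinarith [sqrt5_sq]
    have hconjom : goldenConj = -om := by unfold om goldenConj; ring
    have heq : ∀ n : ℕ, (Nat.fib n : ℝ) * om ^ n = (1 - (-(om^2))^n) / Real.sqrt 5 := by
      intro n
      rw [Real.coe_fib_eq n, hconjom, div_mul_eq_mul_div, sub_mul, ← mul_pow, hgoldom,
        one_pow, ← mul_pow, show (-om) * om = -(om^2) by ring]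
    simp only [heq]
    have habs : |(-(om^2))| < 1 := by
      rw [abs_neg, abs_of_pos (by positivity)]
      nlinarith [om_sq, hom_pos]
    have := tendsto_pow_atTop_nhds_zero_of_abs_lt_one habs
    have h2 : Tendsto (fun n : ℕ => (1 - (-(om^2))^n) / Real.sqrt 5) atTop
        (nhds ((1 - 0) / Real.sqrt 5)) := (tendsto_const_nhds.sub this).div_const _
    simpa using h2
  -- limit of sin(π om^n)/(π om^n)
  have hB : Tendsto (fun n : ℕ => Real.sin (π * om ^ n) / (π * om ^ n)) atTop (nhds 1) := by
    have hd : HasDerivAt Real.sin 1 0 := by simpa using Real.hasDerivAt_sin 0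
    have hs := hasDerivAt_iff_tendsto_slope.mp hd
    have hslope : Tendsto (fun x : ℝ => Real.sin x / x) (nhdsWithin 0 {(0:ℝ)}ᶜ) (nhds 1) := by
      refine hs.congr' ?_
      filter_upwards [self_mem_nhdsWithin] with x hx
      simp [slope, hx, div_eq_inv_mul]
    have hxn : Tendsto (fun n : ℕ => π * om ^ n) atTop (nhdsWithin 0 {(0:ℝ)}ᶜ) := by
      apply tendsto_nhdsWithin_of_tendsto_nhds_of_eventually_within
      · have : Tendsto (fun n : ℕ => om ^ n) atTop (nhds 0) :=
          tendsto_pow_atTop_nhds_zero_of_lt_one (le_of_lt hom_pos) hom_lt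
        simpa using (this.const_mul π)
      · filter_upwards with n
        have : 0 < π * om ^ n := by positivity
        simp [ne_of_gt this]
    exact hslope.comp hxn
  -- limit of denominator D n = fib n * (2 sin (π om^n))
  have hD : Tendsto (fun n : ℕ => (Nat.fib n : ℝ) * (2 * Real.sin (π * om ^ n))) atTop
      (nhds (2 * π / Real.sqrt 5)) := by
    have heq : ∀ᶠ n : ℕ in atTop, (2 * π) * ((Nat.fib n : ℝ) * om ^ n *
        (Real.sin (π * om ^ n) / (π * om ^ n))) =
        (Nat.fib n : ℝ) * (2 * Real.sin (π * om ^ n)) := by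
      filter_upwards with n
      have h0 : π * om ^ n ≠ 0 := by positivity
      field_simp
    have h1 : Tendsto (fun n : ℕ => (2 * π) * ((Nat.fib n : ℝ) * om ^ n *
        (Real.sin (π * om ^ n) / (π * om ^ n)))) atTop
        (nhds ((2 * π) * (1 / Real.sqrt 5 * 1))) := ((hA.mul hB).const_mul _)
    have h2 := h1.congr' heq
    convert h2 using 2
    ring
  have hDne : 2 * π / Real.sqrt 5 ≠ 0 := by
    have := Real.pi_pos
    positivity
  have hfinal : Tendsto (fun n : ℕ => P (Nat.fib n) /
      ((Nat.fib n : ℝ) * (2 * Real.sin (π * om ^ n)))) atTop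
      (nhds (c / (2 * π / Real.sqrt 5))) := hconv.div hD hDne
  have hlim_eq : c / (2 * π / Real.sqrt 5) = c * Real.sqrt 5 / (2 * π) := by
    rw [div_div_eq_mul_div]
  rw [← hlim_eq]
  refine hfinal.congr' ?_
  filter_upwards [eventually_ge_atTop 2] with n hn
  have hfib1 : 0 < Nat.fib n := Nat.fib_pos.mpr (by omega)
  have hs := hsin_pos n (by omega)
  rw [key n hn]
  rw [mul_div_mul_comm]
  have h2 : (2 * Real.sin (π * om ^ n)) ≠ 0 := by positivity
  rw [div_self h2, mul_one]
end
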